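/- arXiv:2209.08186 — 6 statements merged into one kernel-verified Lean document; each statement's English description precedes it below -/
import Mathlib

section
/- Let a, b > −1 and let s be a positive integer. Then: (i) for every integer n ≥ s and all real t, the s-th derivative of J_n^{(a−s,b−s)} satisfies (d/dt)^s J_n^{(a−s,b−s)}(t) = P̂_{n−s}^{(a,b)}(t); (ii) for every integer 0 ≤ k ≤ s−1, the k-th derivative at −1 satisfies (d/dt)^k J_n^{(a−s,b−s)}(−1) = δ_{k,n} if 0 ≤ n ≤ s−1, and (d/dt)^k J_n^{(a−s,b−s)}(−1) = 0 if n ≥ s. -/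
open MeasureTheory Finset

noncomputable section

/-- Pochhammer symbol `(x)_k`. -/
def poch (x : ℝ) (k : ℕ) : ℝ := (ascPochhammer ℝ k).eval x

/-- Jacobi polynomial `P_n^{(a,b)}` for real parameters. -/
def jacobiP (a b : ℝ) (n : ℕ) (t : ℝ) : ℝ :=
  (poch (a + 1) n / (n.factorial : ℝ)) *
    ∑ k ∈ Finset.range (n + 1),
      poch (-(n : ℝ)) k * poch ((n : ℝ) + a + b + 1) k /
        ((k.factorial : ℝ) * poch (a + 1) k) * ((1 - t) / 2) ^ k

/-- Normalizing constant `A_n^{(a,b)}`. -/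
def jacobiA (a b : ℝ) (n : ℕ) : ℝ := 2 ^ n / poch ((n : ℝ) + a + b + 1) n

/-- Normalized Jacobi polynomial `P̂_n^{(a,b)}`. -/
def jacobiPhat (a b : ℝ) (n : ℕ) (t : ℝ) : ℝ := jacobiA a b n * jacobiP a b n t

/-- The polynomials `J_n^{(a-s,b-s)}` (defined from the parameters `a, b > -1`). -/
def jacobiJ (a b : ℝ) (s n : ℕ) (t : ℝ) : ℝ :=
  if n < s then (1 + t) ^ n / (n.factorial : ℝ)
  else ∫ u in (-1 : ℝ)..t, (t - u) ^ (s - 1) / ((s - 1).factorial : ℝ) * jacobiPhat a b (n - s) u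

/-- Antiderivative operator based at `-1`. -/
def antider (g : ℝ → ℝ) (t : ℝ) : ℝ := ∫ u in (-1:ℝ)..t, g u

lemma antider_hasDerivAt {g : ℝ → ℝ} (hg : Continuous g) (t : ℝ) :
    HasDerivAt (antider g) (g t) t :=
  intervalIntegral.integral_hasDerivAt_right (hg.intervalIntegrable _ _)
    (hg.stronglyMeasurableAtFilter _ _) hg.continuousAt

lemma antider_continuous {g : ℝ → ℝ} (hg : Continuous g) : Continuous (antider g) :=
  Differentiable.continuous fun t => (antider_hasDerivAt hg t).differentiableAt

lemma antider_neg_one (g : ℝ → ℝ) : antider g (-1) = 0 :=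
  intervalIntegral.integral_same

lemma antider_iter_continuous {g : ℝ → ℝ} (hg : Continuous g) (j : ℕ) :
    Continuous (antider^[j] g) := by
  induction j with
  | zero => exact hg
  | succ j ih => rw [Function.iterate_succ_apply']; exact antider_continuous ih

lemma key_integral (m : ℕ) :
    ∀ g : ℝ → ℝ, Continuous g → ∀ t : ℝ,
      (∫ u in (-1:ℝ)..t, (t - u) ^ m / (m.factorial : ℝ) * g u) = antider^[m+1] g t := by
  induction m with
  | zero => intro g hg t; simp [antider]
  | succ m ih =>
    intro g hg t
    set A := antider g with hA
    have hAc : Continuous A := antider_continuous hg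
    have key : ∀ u : ℝ,
        HasDerivAt (fun u : ℝ => (t-u)^(m+1) / ((m+1).factorial : ℝ) * A u)
          ((t-u)^(m+1) / ((m+1).factorial : ℝ) * g u
            - (t-u)^m / (m.factorial : ℝ) * A u) u := by
      intro u
      have h1 : HasDerivAt (fun u : ℝ => (t-u)^(m+1) / ((m+1).factorial : ℝ))
          ((((m:ℝ)+1) * (t-u)^m * (-1)) / ((m+1).factorial : ℝ)) u := by
        have := (((hasDerivAt_id u).const_sub t).pow (m+1)).div_const ((m+1).factorial : ℝ)
        simpa using this
      have h2 := h1.mul (antider_hasDerivAt hg u)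
      convert h2 using 1
      case e'_4 => rfl
      case e'_5 => rfl
      case e'_8 => rfl
      have hm : (m.factorial : ℝ) ≠ 0 := Nat.cast_ne_zero.2 m.factorial_ne_zero
      rw [Nat.factorial_succ]
      push_cast
      field_simp
      ring
    have hint : IntervalIntegrable (fun u : ℝ =>
        (t-u)^(m+1) / ((m+1).factorial : ℝ) * g u - (t-u)^m / (m.factorial : ℝ) * A u)
        MeasureTheory.volume (-1) t := by
      apply Continuous.intervalIntegrable
      fun_prop
    have h0 := intervalIntegral.integral_eq_sub_of_hasDerivAt (fun u _ => key u) hint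
    rw [show A (-1) = 0 from antider_neg_one g] at h0
    simp only [sub_self, zero_pow (Nat.succ_ne_zero m), zero_div, zero_mul, mul_zero,
      sub_zero] at h0
    have hsplit : (∫ u in (-1:ℝ)..t,
        ((t-u)^(m+1) / ((m+1).factorial : ℝ) * g u - (t-u)^m / (m.factorial : ℝ) * A u))
        = (∫ u in (-1:ℝ)..t, (t-u)^(m+1) / ((m+1).factorial : ℝ) * g u)
          - ∫ u in (-1:ℝ)..t, (t-u)^m / (m.factorial : ℝ) * A u := by
      apply intervalIntegral.integral_sub <;> apply Continuous.intervalIntegrable <;> fun_prop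
    rw [hsplit] at h0
    rw [sub_eq_zero] at h0
    rw [h0, ih A hAc t, ← Function.iterate_succ_apply]

lemma iteratedDeriv_antider {g : ℝ → ℝ} (hg : Continuous g) (k : ℕ) :
    ∀ j : ℕ, iteratedDeriv k (antider^[j + k] g) = antider^[j] g := by
  induction k with
  | zero => intro j; simp [iteratedDeriv_zero]
  | succ k ih =>
    intro j
    rw [iteratedDeriv_succ', show j + (k+1) = (j + k) + 1 by ring]
    have hd : deriv (antider^[(j+k) + 1] g) = antider^[j+k] g := by
      funext u
      rw [Function.iterate_succ_apply']
      exact (antider_hasDerivAt (antider_iter_continuous hg (j+k)) u).deriv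
    rw [hd, ih j]

lemma iteratedDeriv_one_add_pow (n : ℕ) :
    ∀ k : ℕ, iteratedDeriv k (fun t : ℝ => (1+t)^n / (n.factorial : ℝ)) =
      fun t : ℝ => if k ≤ n then (1+t)^(n-k) / ((n-k).factorial : ℝ) else 0 := by
  intro k
  induction k with
  | zero => simp
  | succ k ih =>
    rw [iteratedDeriv_succ, ih]
    funext t
    by_cases hk : k ≤ n
    · rcases eq_or_lt_of_le hk with h | h
      · subst h
        simp
      · have h1 : k + 1 ≤ n := h
        simp only [if_pos hk, if_pos h1]
        obtain ⟨m, hm⟩ : ∃ m, n - k = m + 1 := ⟨n - k - 1, by omega⟩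
        have hm2 : n - (k+1) = m := by omega
        rw [hm, hm2]
        have h2 : HasDerivAt (fun t : ℝ => (1+t)^(m+1) / ((m+1).factorial : ℝ))
            ((1+t)^m / (m.factorial : ℝ)) t := by
          have := (((hasDerivAt_id t).const_add 1).pow (m+1)).div_const ((m+1).factorial : ℝ)
          convert this using 1
          case e'_4 => rfl
          case e'_5 => rfl
          case e'_8 => rfl
          have hmne : (m.factorial : ℝ) ≠ 0 := Nat.cast_ne_zero.2 m.factorial_ne_zero
          rw [Nat.factorial_succ]
          push_cast
          field_simp
          simp only [id]
        exact h2.deriv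
    · have h1 : ¬ (k + 1 ≤ n) := by omega
      simp [hk, h1]

lemma jacobiPhat_continuous (a b : ℝ) (n : ℕ) : Continuous (jacobiPhat a b n) := by
  unfold jacobiPhat jacobiP
  fun_prop

/-- derivatives of `J_n^{(a-s,b-s)}`. -/
theorem jacobiJ_deriv (a b : ℝ) (ha : -1 < a) (hb : -1 < b) (s : ℕ) (hs : 1 ≤ s) :
    (∀ n : ℕ, s ≤ n → ∀ t : ℝ,
      iteratedDeriv s (jacobiJ a b s n) t = jacobiPhat a b (n - s) t) ∧
    (∀ n k : ℕ, k ≤ s - 1 →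
      (n ≤ s - 1 → iteratedDeriv k (jacobiJ a b s n) (-1) = if k = n then 1 else 0) ∧
      (s ≤ n → iteratedDeriv k (jacobiJ a b s n) (-1) = 0)) := by
  have hJfun : ∀ n : ℕ, s ≤ n →
      jacobiJ a b s n = antider^[s] (jacobiPhat a b (n - s)) := by
    intro n hn
    funext t
    rw [jacobiJ, if_neg (by omega)]
    have := key_integral (s-1) (jacobiPhat a b (n-s)) (jacobiPhat_continuous a b (n-s)) t
    rwa [show s - 1 + 1 = s by omega] at this
  constructor
  · intro n hn t
    rw [hJfun n hn]
    have := iteratedDeriv_antider (jacobiPhat_continuous a b (n-s)) s 0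
    rw [zero_add] at this
    rw [this]
    simp
  · intro n k hk
    constructor
    · intro hn
      have hns : n < s := by omega
      have hJ : jacobiJ a b s n = fun t : ℝ => (1+t)^n / (n.factorial : ℝ) := by
        funext t; rw [jacobiJ, if_pos hns]
      rw [hJ, iteratedDeriv_one_add_pow n k]
      by_cases hkn : k ≤ n
      · rcases eq_or_lt_of_le hkn with h | h
        · subst h; simp
        · have : n - k ≠ 0 := by omega
          simp [hkn, zero_pow this, show k ≠ n by omega]
      · simp [hkn, show k ≠ n by omega]
    · intro hn
      rw [hJfun n hn]
      set P := jacobiPhat a b (n - s) with hP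
      have hPc : Continuous P := jacobiPhat_continuous a b (n - s)
      have hsk : s = (s - k - 1 + 1) + k := by omega
      rw [hsk, iteratedDeriv_antider hPc k (s-k-1+1), Function.iterate_succ_apply']
      exact antider_neg_one _

end
end

section
/- Let a > −1 be real and let s ≥ 1 and n ≥ 0 be integers. Then for all real t, ∫_{−1}^{t} ((t−u)^{s−1}/(s−1)!) P_n^{(a+s,0)}(u) du = (n!/(n+s)!) · (1+t)^s · P_n^{(a,s)}(t). -/
open MeasureTheory Finset

noncomputable section

/- ### Auxiliary lemmas -/

lemma poch_succ (x : ℝ) (k : ℕ) : poch x (k+1) = poch x k * (x + k) := by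
  simp [poch, ascPochhammer_succ_right]

lemma poch_succ_left (x : ℝ) (k : ℕ) : poch x (k+1) = x * poch (x+1) k := by
  simp [poch, ascPochhammer_succ_left]

lemma poch_pos {x : ℝ} (hx : 0 < x) (k : ℕ) : 0 < poch x k := by
  induction k with
  | zero => simp [poch]
  | succ k ih => rw [poch_succ]; exact mul_pos ih (by positivity)

lemma continuous_jacobiP (a b : ℝ) (n : ℕ) : Continuous fun t => jacobiP a b n t := by
  unfold jacobiP
  exact continuous_const.mul (continuous_finset_sum _ fun k _ =>
    continuous_const.mul (((continuous_const.sub continuous_id).div_const 2).pow k))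

/-- Termwise derivative of the Jacobi polynomial. -/
def jacobiPD (a b : ℝ) (n : ℕ) (t : ℝ) : ℝ :=
  (poch (a + 1) n / (n.factorial : ℝ)) *
    ∑ k ∈ Finset.range (n + 1),
      poch (-(n : ℝ)) k * poch ((n : ℝ) + a + b + 1) k /
        ((k.factorial : ℝ) * poch (a + 1) k) * ((k:ℝ) * ((1 - t) / 2) ^ (k-1) * (-(1/2)))

lemma hasDerivAt_jacobiP (a b : ℝ) (n : ℕ) (t : ℝ) :
    HasDerivAt (fun t => jacobiP a b n t) (jacobiPD a b n t) t := by
  unfold jacobiP jacobiPD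
  refine HasDerivAt.const_mul _ (HasDerivAt.fun_sum fun k _ => HasDerivAt.const_mul _ ?_)
  have h : HasDerivAt (fun t : ℝ => (1 - t)/2) (-(1/2)) t := by
    have := ((hasDerivAt_id t).const_sub 1).div_const 2
    norm_num at this
    exact this
  exact h.pow k

lemma sum_deriv_trick (n : ℕ) (q : ℕ → ℝ) (t : ℝ) (hq : q (n+1) = 0) :
    (1 + t) * ∑ k ∈ range (n+1), q k * ((k:ℝ) * ((1-t)/2)^(k-1) * (-(1/2)))
      = ∑ k ∈ range (n+1), (q k * (k:ℝ) - q (k+1) * ((k:ℝ)+1)) * ((1-t)/2)^k := by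
  have ht : 1 + t = 2 - 2*((1-t)/2) := by ring
  rw [ht, Finset.mul_sum]
  have step1 : ∑ k ∈ range (n+1), (2 - 2*((1-t)/2)) * (q k * ((k:ℝ) * ((1-t)/2)^(k-1) * (-(1/2))))
      = ∑ k ∈ range (n+1), (q k * ((k:ℝ) * ((1-t)/2)^k) - q k * ((k:ℝ) * ((1-t)/2)^(k-1))) := by
    refine Finset.sum_congr rfl fun k _ => ?_
    match k with
    | 0 => norm_num
    | (j+1) =>
      simp only [Nat.add_sub_cancel]
      rw [pow_succ]
      push_cast
      ring
  rw [step1, Finset.sum_sub_distrib]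
  have step2 : ∑ k ∈ range (n+1), q k * ((k:ℝ) * ((1-t)/2)^(k-1))
      = ∑ k ∈ range (n+1), q (k+1) * (((k:ℝ)+1) * ((1-t)/2)^k) := by
    rw [Finset.sum_range_succ' _ n, Finset.sum_range_succ]
    simp only [hq, Nat.cast_zero, zero_mul, mul_zero, add_zero, zero_mul, mul_zero]
    refine Finset.sum_congr rfl fun k _ => ?_
    simp only [Nat.add_sub_cancel]
    push_cast
    ring
  rw [step2, ← Finset.sum_sub_distrib]
  refine Finset.sum_congr rfl fun k _ => ?_
  ring

/-- The key contiguous relation. -/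
lemma key (a b : ℝ) (ha : 0 < a + 1) (n : ℕ) (t : ℝ) :
    ((n:ℝ) + b + 1) * jacobiP (a+1) b n t
      = (b + 1) * jacobiP a (b+1) n t + (1 + t) * jacobiPD a (b+1) n t := by
  unfold jacobiP jacobiPD
  rw [show (n:ℝ) + (a+1) + b + 1 = (n:ℝ) + a + (b+1) + 1 from by ring]
  rw [mul_left_comm (1+t)]
  have hq : (fun k => poch (-(n:ℝ)) k * poch ((n:ℝ) + a + (b+1) + 1) k /
      ((k.factorial:ℝ) * poch (a+1) k)) (n+1) = 0 := by
    have h0 : poch (-(n:ℝ)) (n+1) = 0 := by rw [poch_succ]; simp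
    simp only [h0]
    ring
  rw [sum_deriv_trick n (fun k => poch (-(n:ℝ)) k * poch ((n:ℝ) + a + (b+1) + 1) k /
      ((k.factorial:ℝ) * poch (a+1) k)) t hq]
  simp only [Finset.mul_sum]
  rw [← Finset.sum_add_distrib]
  refine Finset.sum_congr rfl fun k hk => ?_
  have hA : (a+1) * poch (a+1+1) n = poch (a+1) n * (a+1+(n:ℝ)) := by
    rw [← poch_succ_left, poch_succ]
  have hAk : (a+1) * poch (a+1+1) k = poch (a+1) k * (a+1+(k:ℝ)) := by
    rw [← poch_succ_left, poch_succ]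
  have h1 : poch (a+1+1) n = poch (a+1) n * (a+1+(n:ℝ)) / (a+1) := by
    rw [eq_div_iff ha.ne']; linear_combination hA
  have h1k : poch (a+1+1) k = poch (a+1) k * (a+1+(k:ℝ)) / (a+1) := by
    rw [eq_div_iff ha.ne']; linear_combination hAk
  simp only [poch_succ, Nat.factorial_succ, h1, h1k]
  push_cast
  have hp1 : poch (a+1) k ≠ 0 := (poch_pos ha k).ne'
  have hp2 : poch (a+1) n ≠ 0 := (poch_pos ha n).ne'
  have hk1 : (k.factorial : ℝ) ≠ 0 := by positivity
  have hn1 : (n.factorial : ℝ) ≠ 0 := by positivity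
  have hak : a+1+(k:ℝ) ≠ 0 := by positivity
  have han : a+1+(n:ℝ) ≠ 0 := by positivity
  field_simp
  ring

/- ### Integral machinery -/

lemma integral_sub_pow_mul (f : ℝ → ℝ) (hf : Continuous f) (m : ℕ) (x : ℝ) :
    (∫ u in (-1:ℝ)..x, (x - u)^m * f u)
      = ∑ k ∈ range (m+1), ((m.choose k : ℝ) * (-1)^(m-k)) *
          (x^k * ∫ u in (-1:ℝ)..x, u^(m-k) * f u) := by
  have h1 : ∀ u : ℝ, (x - u)^m * f u
      = ∑ k ∈ range (m+1), ((m.choose k : ℝ) * (-1)^(m-k)) * (x^k * (u^(m-k) * f u)) := by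
    intro u
    rw [sub_eq_add_neg, add_pow, Finset.sum_mul]
    refine Finset.sum_congr rfl fun k _ => ?_
    rw [neg_pow]
    ring
  simp only [h1]
  rw [intervalIntegral.integral_finset_sum]
  · refine Finset.sum_congr rfl fun k _ => ?_
    rw [intervalIntegral.integral_const_mul, intervalIntegral.integral_const_mul]
  · intro k _
    apply Continuous.intervalIntegrable
    exact continuous_const.mul (continuous_const.mul ((continuous_pow _).mul hf))

lemma hasDerivAt_integral_monomial (f : ℝ → ℝ) (hf : Continuous f) (j : ℕ) (t : ℝ) :
    HasDerivAt (fun x => ∫ u in (-1:ℝ)..x, u^j * f u) (t^j * f t) t := by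
  have hc : Continuous fun u : ℝ => u^j * f u := (continuous_pow j).mul hf
  exact intervalIntegral.integral_hasDerivAt_right (hc.intervalIntegrable _ _)
    (hc.stronglyMeasurableAtFilter _ _) hc.continuousAt

lemma hasDerivAt_integral_sub_pow (f : ℝ → ℝ) (hf : Continuous f) (m : ℕ) (t : ℝ) :
    HasDerivAt (fun x => ∫ u in (-1:ℝ)..x, (x - u)^(m+1) * f u)
      (((m:ℝ)+1) * ∫ u in (-1:ℝ)..t, (t - u)^m * f u) t := by
  have hG : HasDerivAt
      (fun x => ∑ k ∈ range (m+2), ((m+1).choose k : ℝ) * (-1)^(m+1-k) *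
          (x^k * ∫ u in (-1:ℝ)..x, u^(m+1-k) * f u))
      (∑ k ∈ range (m+2), ((m+1).choose k : ℝ) * (-1)^(m+1-k) *
          (((k:ℝ) * t^(k-1)) * (∫ u in (-1:ℝ)..t, u^(m+1-k) * f u)
            + t^k * (t^(m+1-k) * f t))) t := by
    refine HasDerivAt.fun_sum fun k _ => HasDerivAt.const_mul _ ?_
    exact (hasDerivAt_pow k t).mul (hasDerivAt_integral_monomial f hf (m+1-k) t)
  have heq : (fun x => ∫ u in (-1:ℝ)..x, (x - u)^(m+1) * f u)
      = (fun x => ∑ k ∈ range (m+2), ((m+1).choose k : ℝ) * (-1)^(m+1-k) *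
          (x^k * ∫ u in (-1:ℝ)..x, u^(m+1-k) * f u)) := by
    funext x; exact integral_sub_pow_mul f hf (m+1) x
  rw [heq]
  convert hG using 1
  have hsplit : (∑ k ∈ range (m+2), ((m+1).choose k : ℝ) * (-1)^(m+1-k) *
          (((k:ℝ) * t^(k-1)) * (∫ u in (-1:ℝ)..t, u^(m+1-k) * f u)
            + t^k * (t^(m+1-k) * f t)))
      = (∑ k ∈ range (m+2), ((m+1).choose k : ℝ) * (-1)^(m+1-k) *
          (((k:ℝ) * t^(k-1)) * (∫ u in (-1:ℝ)..t, u^(m+1-k) * f u)))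
        + (∑ k ∈ range (m+2), ((m+1).choose k : ℝ) * (-1)^(m+1-k)) * (t^(m+1) * f t) := by
    rw [Finset.sum_mul, ← Finset.sum_add_distrib]
    refine Finset.sum_congr rfl fun k hk => ?_
    have hk' : k ≤ m+1 := by simpa [Nat.lt_succ_iff] using hk
    have h2 : t^k * t^(m+1-k) = t^(m+1) := by
      rw [← pow_add]; congr 1; omega
    have h3 : t ^ k * (t ^ (m + 1 - k) * f t) = t^(m+1) * f t := by
      rw [← mul_assoc, h2]
    rw [mul_add, h3]
  rw [hsplit]
  have hzero : (∑ k ∈ range (m+2), ((m+1).choose k : ℝ) * (-1)^(m+1-k)) = 0 := by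
    have := add_pow (1:ℝ) (-1) (m+1)
    simp only [one_pow, one_mul] at this
    norm_num at this
    calc ∑ k ∈ range (m+2), ((m+1).choose k : ℝ) * (-1)^(m+1-k)
        = ∑ k ∈ range (m+1+1), (-1:ℝ)^(m+1-k) * ((m+1).choose k : ℝ) :=
          Finset.sum_congr (by norm_num) fun k _ => by ring
      _ = 0 := this.symm
  rw [hzero, zero_mul, add_zero]
  rw [Finset.sum_range_succ']
  simp only [Nat.cast_zero, zero_mul, pow_zero, mul_zero, zero_mul, add_zero]
  rw [integral_sub_pow_mul f hf m t, Finset.mul_sum]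
  refine Finset.sum_congr rfl fun k hk => ?_
  have hc : (((m+1).choose (k+1) : ℝ)) * ((k:ℝ)+1) = ((m:ℝ)+1) * (m.choose k : ℝ) := by
    have := Nat.add_one_mul_choose_eq m k
    have h2 : ((m+1) * m.choose k : ℕ) = ((m+1).choose (k+1) * (k+1) : ℕ) := by
      simpa [Nat.succ_eq_add_one] using this
    have := congrArg (Nat.cast : ℕ → ℝ) h2
    push_cast at this
    linarith
  have hsub : m + 1 - (k+1) = m - k := by omega
  rw [hsub]
  simp only [Nat.add_sub_cancel]
  push_cast
  linear_combination (-((-1:ℝ))^(m-k)) * t^k * (∫ u in (-1:ℝ)..t, u^(m-k) * f u) * hc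

lemma eq_of_derivs (F G d : ℝ → ℝ) (hF : ∀ x, HasDerivAt F (d x) x)
    (hG : ∀ x, HasDerivAt G (d x) x) (h : F (-1) = G (-1)) (t : ℝ) : F t = G t := by
  have hzero : ∀ x, HasDerivAt (fun y => F y - G y) 0 x := fun x => by
    have := (hF x).sub (hG x); rw [sub_self] at this; exact this
  have h2 : F t - G t = F (-1) - G (-1) :=
    is_const_of_deriv_eq_zero (fun z => (hzero z).differentiableAt)
      (fun z => (hzero z).deriv) t (-1)
  rw [h] at h2
  linarith

lemma hasDerivAt_one_add_pow (s : ℕ) (x : ℝ) :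
    HasDerivAt (fun x : ℝ => (1+x)^s) ((s:ℝ) * (1+x)^(s-1)) x := by
  have := ((hasDerivAt_id x).const_add 1).pow s
  simp only [id, mul_one] at this
  exact this

lemma hasDerivAt_G (a bb : ℝ) (n : ℕ) (c : ℝ) (s : ℕ) (x : ℝ) :
    HasDerivAt (fun x => c * ((1+x)^s * jacobiP a bb n x))
      (c * (((s:ℝ) * (1+x)^(s-1)) * jacobiP a bb n x + (1+x)^s * jacobiPD a bb n x)) x :=
  ((hasDerivAt_one_add_pow s x).mul (hasDerivAt_jacobiP a bb n x)).const_mul c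

/- ### Main induction -/

lemma main_induction (n s : ℕ) (hs : 1 ≤ s) : ∀ a : ℝ, -1 < a → ∀ t : ℝ,
    (∫ u in (-1:ℝ)..t, (t-u)^(s-1) * jacobiP (a + s) 0 n u)
      = ((s-1).factorial : ℝ) * ((n.factorial : ℝ) / ((n+s).factorial : ℝ)) *
          ((1+t)^s * jacobiP a s n t) := by
  induction s, hs using Nat.le_induction with
  | base =>
    intro a ha t
    have h11 : (1:ℕ) - 1 = 0 := rfl
    simp only [h11, pow_zero, one_mul, Nat.cast_one, Nat.factorial_zero]
    have hc := continuous_jacobiP (a+1) 0 n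
    refine eq_of_derivs (fun x => ∫ u in (-1:ℝ)..x, jacobiP (a+1) 0 n u)
      (fun x => (n.factorial:ℝ)/((n+1).factorial:ℝ) * ((1+x)^1 * jacobiP a 1 n x))
      (fun x => jacobiP (a+1) 0 n x) ?_ ?_ ?_ t
    · intro x
      exact intervalIntegral.integral_hasDerivAt_right (hc.intervalIntegrable _ _)
        (hc.stronglyMeasurableAtFilter _ _) hc.continuousAt
    · intro x
      have h := hasDerivAt_G a 1 n ((n.factorial:ℝ)/((n+1).factorial:ℝ)) 1 x
      have hk := key a 0 (by linarith) n x
      norm_num at hk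
      have hfac : ((n+1).factorial:ℝ) = ((n:ℝ)+1) * (n.factorial:ℝ) := by
        rw [Nat.factorial_succ]; push_cast; ring
      have hval : (n.factorial:ℝ)/((n+1).factorial:ℝ) *
          (((1:ℝ) * (1+x)^(1-1)) * jacobiP a 1 n x + (1+x)^1 * jacobiPD a 1 n x)
            = jacobiP (a+1) 0 n x := by
        have hne2 : (n.factorial:ℝ) ≠ 0 := by positivity
        rw [div_mul_eq_mul_div, div_eq_iff (by positivity : ((n+1).factorial:ℝ) ≠ 0), hfac]
        linear_combination (-(n.factorial:ℝ)) * hk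
      rw [show ((1:ℕ):ℝ) = (1:ℝ) from by norm_num] at h
      rw [hval] at h
      exact h
    · simp only [intervalIntegral.integral_same]
      norm_num
  | succ m hm IH =>
    intro a ha t
    obtain ⟨m', rfl⟩ : ∃ m', m = m'+1 := ⟨m-1, by omega⟩
    simp only [Nat.add_sub_cancel]
    rw [show (a + ((m'+1+1 : ℕ):ℝ)) = ((a+1) + ((m'+1:ℕ):ℝ)) from by push_cast; ring]
    have hcont := continuous_jacobiP ((a+1) + ((m'+1:ℕ):ℝ)) 0 n
    have hIH := IH (a+1) (by linarith)
    simp only [Nat.add_sub_cancel] at hIH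
    refine eq_of_derivs
      (fun x => ∫ u in (-1:ℝ)..x, (x-u)^(m'+1) * jacobiP ((a+1) + ((m'+1:ℕ):ℝ)) 0 n u)
      (fun x => ((m'+1).factorial:ℝ) * ((n.factorial:ℝ)/((n+(m'+1+1)).factorial:ℝ)) *
        ((1+x)^(m'+1+1) * jacobiP a ((m'+1+1:ℕ):ℝ) n x))
      (fun x => ((m':ℝ)+1) * ((m'.factorial:ℝ) * ((n.factorial:ℝ)/((n+(m'+1)).factorial:ℝ)) *
        ((1+x)^(m'+1) * jacobiP (a+1) ((m'+1:ℕ):ℝ) n x))) ?_ ?_ ?_ t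
    · intro x
      have h := hasDerivAt_integral_sub_pow _ hcont m' x
      rw [hIH x] at h
      exact h
    · intro x
      have h := hasDerivAt_G a ((m'+1+1:ℕ):ℝ) n
        (((m'+1).factorial:ℝ) * ((n.factorial:ℝ)/((n+(m'+1+1)).factorial:ℝ))) (m'+1+1) x
      have hk := key a ((m'+1:ℕ):ℝ) (by linarith) n x
      rw [show ((m'+1:ℕ):ℝ)+1 = ((m'+1+1:ℕ):ℝ) from by push_cast; ring] at hk
      have hfacA : ((n+(m'+1+1)).factorial:ℝ)
          = ((n:ℝ)+(m':ℝ)+2) * ((n+(m'+1)).factorial:ℝ) := by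
        rw [show n+(m'+1+1) = (n+(m'+1))+1 from by omega, Nat.factorial_succ]
        push_cast; ring
      have hfacB : ((m'+1).factorial:ℝ) = ((m':ℝ)+1)*(m'.factorial:ℝ) := by
        rw [Nat.factorial_succ]; push_cast; ring
      have hval : (((m'+1).factorial:ℝ) * ((n.factorial:ℝ)/((n+(m'+1+1)).factorial:ℝ))) *
          ((((m'+1+1:ℕ):ℝ) * (1+x)^(m'+1+1-1)) * jacobiP a ((m'+1+1:ℕ):ℝ) n x
            + (1+x)^(m'+1+1) * jacobiPD a ((m'+1+1:ℕ):ℝ) n x)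
          = ((m':ℝ)+1) * ((m'.factorial:ℝ) * ((n.factorial:ℝ)/((n+(m'+1)).factorial:ℝ)) *
              ((1+x)^(m'+1) * jacobiP (a+1) ((m'+1:ℕ):ℝ) n x)) := by
        simp only [Nat.add_sub_cancel]
        rw [hfacA, hfacB, pow_succ (1+x) (m'+1)]
        push_cast at hk ⊢
        have hne1 : ((n+(m'+1)).factorial:ℝ) ≠ 0 := by positivity
        have hne3 : ((n:ℝ)+(m':ℝ)+2) ≠ 0 := by positivity
        field_simp
        linear_combination (-((1+x)^(m'+1))) * hk
      rw [hval] at h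
      exact h
    · simp only [intervalIntegral.integral_same]
      rw [show (1:ℝ) + (-1) = 0 from by norm_num, zero_pow (by omega : m'+1+1 ≠ 0)]
      ring

/-- iterated antiderivative of `P_n^{(a+s,0)}`. -/
theorem integral_jacobiP_eq (a : ℝ) (ha : -1 < a) (s : ℕ) (hs : 1 ≤ s) (n : ℕ) (t : ℝ) :
    (∫ u in (-1 : ℝ)..t, (t - u) ^ (s - 1) / ((s - 1).factorial : ℝ) * jacobiP (a + s) 0 n u)
      = (n.factorial : ℝ) / ((n + s).factorial : ℝ) * (1 + t) ^ s * jacobiP a s n t := by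
  have hm := main_induction n s hs a ha t
  have h1 : ∀ u : ℝ, (t-u)^(s-1)/((s-1).factorial:ℝ) * jacobiP (a + s) 0 n u
      = (((s-1).factorial:ℝ))⁻¹ * ((t-u)^(s-1) * jacobiP (a + s) 0 n u) := by
    intro u; ring
  simp only [h1]
  rw [intervalIntegral.integral_const_mul, hm]
  have hne : (((s-1).factorial:ℝ)) ≠ 0 := by positivity
  field_simp

end
end

section
/- Let a > −1, let s be a positive integer and let n ≥ s be an integer. Then for all real t, J_n^{(a,−s)}(t) = ((n−s)!/n!) · (1+t)^s · P̂_{n−s}^{(a,s)}(t). -/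
open MeasureTheory Finset

noncomputable section

/-- The polynomials `J_n^{(a,-s)}`, built from `P̂^{(a+s,0)}`. -/
def jacobiJneg (a : ℝ) (s n : ℕ) (t : ℝ) : ℝ := jacobiJ (a + s) 0 s n t

lemma poch_zero (x : ℝ) : poch x 0 = 1 := by simp [poch]
lemma poch_neg_nat (m : ℕ) : poch (-(m:ℝ)) (m+1) = 0 := by
  rw [poch_succ]; simp

/-- coefficient of the Jacobi sum -/
def cc (α : ℝ) (m : ℕ) (S : ℝ) (k : ℕ) : ℝ :=
  poch (-(m:ℝ)) k * poch S k / ((k.factorial:ℝ) * poch (α+1) k)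

lemma phat_eq (α bb : ℝ) (m : ℕ) (t : ℝ) : jacobiPhat α bb m t
    = (2^m / poch ((m:ℝ)+α+bb+1) m) * ((poch (α+1) m / (m.factorial:ℝ)) *
      ∑ k ∈ range (m+1), cc α m ((m:ℝ)+α+bb+1) k * ((1-t)/2)^k) := rfl

lemma cc_top (α S : ℝ) (m : ℕ) : cc α m S (m+1) = 0 := by
  unfold cc; rw [poch_neg_nat]; simp

lemma coeff_id (α : ℝ) (hα : -1 < α) (b m k : ℕ) :
    poch (α+1) m * ( (poch (-(m:ℝ)) k * poch ((m:ℝ)+α+(b:ℝ)+2) k /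
        ((k.factorial:ℝ) * poch (α+1) k)) * ((b:ℝ)+1+(k:ℝ))
      - (poch (-(m:ℝ)) (k+1) * poch ((m:ℝ)+α+(b:ℝ)+2) (k+1) /
        (((k+1).factorial:ℝ) * poch (α+1) (k+1))) * ((k:ℝ)+1) )
  = ((m:ℝ)+(b:ℝ)+1) * poch (α+2) m *
      (poch (-(m:ℝ)) k * poch ((m:ℝ)+α+(b:ℝ)+2) k / ((k.factorial:ℝ) * poch (α+2) k)) := by
  have h1 : (0:ℝ) < α + 1 := by linarith
  have hq : 0 < poch (α+1) k := poch_pos h1 k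
  have hak : (0:ℝ) < α + 1 + k := by positivity
  have hfac : (0:ℝ) < (k.factorial : ℝ) := by exact_mod_cast k.factorial_pos
  have key : ∀ j : ℕ, poch (α+2) j = poch (α+1) j * (α+1+(j:ℝ)) / (α+1) := by
    intro j
    have h : (α+1) * poch (α+2) j = poch (α+1) j * (α+1+(j:ℝ)) := by
      rw [show α+2 = α+1+1 by ring, ← poch_succ_left, poch_succ]
    field_simp
    linarith [h]
  rw [key m, key k, poch_succ (-(m:ℝ)) k, poch_succ ((m:ℝ)+α+(b:ℝ)+2) k, poch_succ (α+1) k]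
  have hfs : ((k+1).factorial : ℝ) = ((k:ℝ)+1) * (k.factorial : ℝ) := by
    rw [Nat.factorial_succ]; push_cast; ring
  rw [hfs]
  field_simp
  ring

lemma coeff_id' (α : ℝ) (hα : -1 < α) (b m k : ℕ) :
    poch (α+1) m * (cc α m ((m:ℝ)+α+(b:ℝ)+2) k * ((b:ℝ)+1+(k:ℝ))
      - cc α m ((m:ℝ)+α+(b:ℝ)+2) (k+1) * ((k:ℝ)+1))
  = ((m:ℝ)+(b:ℝ)+1) * poch (α+1+1) m * cc (α+1) m ((m:ℝ)+α+(b:ℝ)+2) k := by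
  unfold cc
  rw [show α+1+1 = α+2 by ring]
  exact coeff_id α hα b m k

lemma shift_sum (C : ℕ → ℝ) (x : ℝ) (m : ℕ) (htop : C (m+1) = 0) :
    ∑ k ∈ range (m+1), C k * ((k:ℝ) * x^(k-1))
      = ∑ k ∈ range (m+1), C (k+1) * (((k:ℝ)+1) * x^k) := by
  rw [Finset.sum_range_succ' (fun k => C k * ((k:ℝ) * x^(k-1))) m,
      Finset.sum_range_succ (fun k => C (k+1) * (((k:ℝ)+1) * x^k)) m, htop]
  simp only [Nat.cast_zero, zero_mul, mul_zero, add_zero, Nat.cast_add, Nat.cast_one,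
    Nat.add_sub_cancel, zero_add]

lemma expand_sum (C : ℕ → ℝ) (t : ℝ) (b m : ℕ) (htop : C (m+1) = 0) :
    (1+t)^(b+1) * (∑ k ∈ range (m+1), C k * ((k:ℝ) * ((1-t)/2)^(k-1) * (-(1/2))))
      = (1+t)^b * ((∑ k ∈ range (m+1), C k * ((k:ℝ) * ((1-t)/2)^k))
          - ∑ k ∈ range (m+1), C (k+1) * (((k:ℝ)+1) * ((1-t)/2)^k)) := by
  set x : ℝ := (1-t)/2 with hx
  have hy : (1+t) = 2 - 2*x := by rw [hx]; ring
  have hxk : ∀ k : ℕ, (k:ℝ) * x^(k-1) * x = (k:ℝ) * x^k := by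
    intro k
    cases k with
    | zero => simp
    | succ k => rw [Nat.add_sub_cancel, pow_succ]; ring
  have hstep : (1+t) * (-(1/2)) = x - 1 := by rw [hx]; ring
  rw [← shift_sum C x m htop, ← Finset.sum_sub_distrib, pow_succ, Finset.mul_sum,
    Finset.mul_sum]
  apply Finset.sum_congr rfl
  intro k _
  calc (1+t)^b * (1+t) * (C k * ((k:ℝ) * x^(k-1) * (-(1/2))))
      = (1+t)^b * (C k * ((k:ℝ) * x^(k-1)) * ((1+t) * (-(1/2)))) := by ring
    _ = (1+t)^b * (C k * ((k:ℝ) * x^(k-1)) * (x - 1)) := by rw [hstep]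
    _ = C k * ((k:ℝ) * x^(k-1) * x) * (1+t)^b - C k * ((k:ℝ) * x^(k-1)) * (1+t)^b := by ring
    _ = C k * ((k:ℝ) * x^k) * (1+t)^b - C k * ((k:ℝ) * x^(k-1)) * (1+t)^b := by rw [hxk k]
    _ = (1+t)^b * (C k * ((k:ℝ) * x^k) - C k * ((k:ℝ) * x^(k-1))) := by ring

lemma key_sum (α : ℝ) (hα : -1 < α) (b m : ℕ) (x : ℝ) :
    poch (α+1) m * (((b:ℝ)+1) * (∑ k ∈ range (m+1), cc α m ((m:ℝ)+α+(b:ℝ)+2) k * x^k)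
      + ((∑ k ∈ range (m+1), cc α m ((m:ℝ)+α+(b:ℝ)+2) k * ((k:ℝ) * x^k))
        - ∑ k ∈ range (m+1), cc α m ((m:ℝ)+α+(b:ℝ)+2) (k+1) * (((k:ℝ)+1) * x^k)))
  = ((m:ℝ)+(b:ℝ)+1) * (poch (α+1+1) m
      * ∑ k ∈ range (m+1), cc (α+1) m ((m:ℝ)+α+(b:ℝ)+2) k * x^k) := by
  rw [Finset.mul_sum, ← Finset.sum_sub_distrib, ← Finset.sum_add_distrib, Finset.mul_sum,
    Finset.mul_sum, Finset.mul_sum]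
  apply Finset.sum_congr rfl
  intro k _
  have h := coeff_id' α hα b m k
  calc poch (α+1) m * (((b:ℝ)+1) * (cc α m ((m:ℝ)+α+(b:ℝ)+2) k * x^k)
        + (cc α m ((m:ℝ)+α+(b:ℝ)+2) k * ((k:ℝ) * x^k)
          - cc α m ((m:ℝ)+α+(b:ℝ)+2) (k+1) * (((k:ℝ)+1) * x^k)))
      = poch (α+1) m * (cc α m ((m:ℝ)+α+(b:ℝ)+2) k * ((b:ℝ)+1+(k:ℝ))
          - cc α m ((m:ℝ)+α+(b:ℝ)+2) (k+1) * ((k:ℝ)+1)) * x^k := by ring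
    _ = ((m:ℝ)+(b:ℝ)+1) * poch (α+1+1) m * cc (α+1) m ((m:ℝ)+α+(b:ℝ)+2) k * x^k := by rw [h]
    _ = ((m:ℝ)+(b:ℝ)+1) * (poch (α+1+1) m * (cc (α+1) m ((m:ℝ)+α+(b:ℝ)+2) k * x^k)) := by ring

lemma hasDerivAt_D (α : ℝ) (hα : -1 < α) (b m : ℕ) (t : ℝ) :
    HasDerivAt (fun t => (1+t)^(b+1) * jacobiPhat α ((b:ℝ)+1) m t)
      (((m:ℝ)+(b:ℝ)+1) * ((1+t)^b * jacobiPhat (α+1) ((b):ℝ) m t)) t := by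
  have e1 : (m:ℝ)+α+((b:ℝ)+1)+1 = (m:ℝ)+α+(b:ℝ)+2 := by ring
  have e2 : (m:ℝ)+(α+1)+(b:ℝ)+1 = (m:ℝ)+α+(b:ℝ)+2 := by ring
  have hrw1 : ∀ u : ℝ, (1+u)^(b+1) * jacobiPhat α ((b:ℝ)+1) m u
      = (2^m / poch ((m:ℝ)+α+(b:ℝ)+2) m / (m.factorial:ℝ)) * (poch (α+1) m *
        ((1+u)^(b+1) * ∑ k ∈ range (m+1), cc α m ((m:ℝ)+α+(b:ℝ)+2) k * ((1-u)/2)^k)) := by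
    intro u
    rw [phat_eq]
    simp only [e1]
    ring
  have hrw2 : jacobiPhat (α+1) ((b):ℝ) m t
      = (2^m / poch ((m:ℝ)+α+(b:ℝ)+2) m / (m.factorial:ℝ)) * (poch (α+1+1) m *
        ∑ k ∈ range (m+1), cc (α+1) m ((m:ℝ)+α+(b:ℝ)+2) k * ((1-t)/2)^k) := by
    rw [phat_eq]
    simp only [e2]
    ring
  simp only [hrw1, hrw2]
  set K : ℝ := 2^m / poch ((m:ℝ)+α+(b:ℝ)+2) m / (m.factorial:ℝ) with hK
  have h1 : HasDerivAt (fun u : ℝ => (1+u)^(b+1)) (((b:ℝ)+1) * (1+t)^b) t := by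
    have := ((hasDerivAt_id t).const_add 1).fun_pow (b+1)
    simpa using this
  have hxd : HasDerivAt (fun u : ℝ => (1-u)/2) (-(1/2) : ℝ) t := by
    have := ((hasDerivAt_id t).const_sub 1).div_const 2
    refine this.congr_deriv (Eq.symm ?_)
    norm_num
  have h2 : HasDerivAt (fun u : ℝ => ∑ k ∈ range (m+1), cc α m ((m:ℝ)+α+(b:ℝ)+2) k * ((1-u)/2)^k)
      (∑ k ∈ range (m+1), cc α m ((m:ℝ)+α+(b:ℝ)+2) k * ((k:ℝ) * ((1-t)/2)^(k-1) * (-(1/2)))) t := by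
    apply HasDerivAt.fun_sum
    intro k _
    exact (hxd.fun_pow k).const_mul _
  have h4 := ((h1.fun_mul h2).const_mul (poch (α+1) m)).const_mul K
  refine h4.congr_deriv (Eq.symm ?_)
  rw [show ((b:ℝ)+1) * (1+t)^b * (∑ k ∈ range (m+1), cc α m ((m:ℝ)+α+(b:ℝ)+2) k * ((1-t)/2)^k)
        + (1+t)^(b+1) * ∑ k ∈ range (m+1), cc α m ((m:ℝ)+α+(b:ℝ)+2) k * ((k:ℝ) * ((1-t)/2)^(k-1) * (-(1/2)))
      = ((b:ℝ)+1) * (1+t)^b * (∑ k ∈ range (m+1), cc α m ((m:ℝ)+α+(b:ℝ)+2) k * ((1-t)/2)^k)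
        + (1+t)^b * ((∑ k ∈ range (m+1), cc α m ((m:ℝ)+α+(b:ℝ)+2) k * ((k:ℝ) * ((1-t)/2)^k))
          - ∑ k ∈ range (m+1), cc α m ((m:ℝ)+α+(b:ℝ)+2) (k+1) * (((k:ℝ)+1) * ((1-t)/2)^k))
    from by rw [expand_sum _ t b m (cc_top α _ m)]]
  have hkey := key_sum α hα b m ((1-t)/2)
  linear_combination (-(K * (1+t)^b)) * hkey

/-- the `j`-fold antiderivative chain -/
def gfun (a : ℝ) (s m j : ℕ) (t : ℝ) : ℝ :=
  ((m.factorial : ℝ) / ((m+j).factorial : ℝ)) *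
    ((1+t)^j * jacobiPhat (a + s - j) (j:ℝ) m t)

lemma gfun_cont (a : ℝ) (s m j : ℕ) : Continuous (gfun a s m j) := by
  unfold gfun jacobiPhat jacobiP jacobiA
  apply Continuous.mul continuous_const
  apply Continuous.mul (by fun_prop)
  apply Continuous.mul continuous_const
  apply Continuous.mul continuous_const
  apply continuous_finset_sum
  intro k _
  fun_prop

lemma gfun_zero (a : ℝ) (s m j : ℕ) : gfun a s m (j+1) (-1) = 0 := by
  unfold gfun; norm_num

lemma gfun_deriv (a : ℝ) (ha : -1 < a) (s m j : ℕ) (hj : j+1 ≤ s) (x : ℝ) :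
    HasDerivAt (fun t => gfun a s m (j+1) t) (gfun a s m j x) x := by
  have hjs : (j:ℝ)+1 ≤ (s:ℝ) := by exact_mod_cast hj
  have hα : -1 < a + (s:ℝ) - ((j:ℝ)+1) := by linarith
  have h := hasDerivAt_D (a + (s:ℝ) - ((j:ℝ)+1)) hα j m x
  rw [show a + (s:ℝ) - ((j:ℝ)+1) + 1 = a + (s:ℝ) - (j:ℝ) by ring] at h
  have h2 := h.const_mul ((m.factorial : ℝ) / ((m+(j+1)).factorial : ℝ))
  have hf : ((m+(j+1)).factorial : ℝ) = ((m:ℝ)+(j:ℝ)+1) * ((m+j).factorial : ℝ) := by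
    rw [show m+(j+1) = (m+j)+1 from rfl, Nat.factorial_succ]; push_cast; ring
  have hfun : (fun u => ((m.factorial:ℝ)/((m+(j+1)).factorial:ℝ)) *
      ((1+u)^(j+1) * jacobiPhat (a + (s:ℝ) - ((j:ℝ)+1)) ((j:ℝ)+1) m u))
      = fun u => gfun a s m (j+1) u := by
    funext u; unfold gfun; push_cast; ring
  have hval : ((m.factorial:ℝ)/((m+(j+1)).factorial:ℝ)) *
      (((m:ℝ)+(j:ℝ)+1) * ((1+x)^j * jacobiPhat (a + (s:ℝ) - (j:ℝ)) ((j):ℝ) m x))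
      = gfun a s m j x := by
    unfold gfun
    rw [hf]
    have h1 : ((m+j).factorial : ℝ) ≠ 0 := by
      exact_mod_cast (m+j).factorial_ne_zero
    have h2 : ((m:ℝ)+(j:ℝ)+1) ≠ 0 := by positivity
    field_simp
  rw [hfun, hval] at h2
  exact h2

lemma gstep (a : ℝ) (ha : -1 < a) (s m j : ℕ) (hj : j+1 ≤ s) (t : ℝ) :
    ∫ u in (-1:ℝ)..t, gfun a s m j u = gfun a s m (j+1) t := by
  rw [intervalIntegral.integral_eq_sub_of_hasDerivAt
    (fun x _ => gfun_deriv a ha s m j hj x)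
    ((gfun_cont a s m j).intervalIntegrable _ _), gfun_zero, sub_zero]

lemma kernel_int (a : ℝ) (ha : -1 < a) (s m : ℕ) (t : ℝ) :
    ∀ p q : ℕ, p + q + 1 ≤ s →
      (∫ u in (-1:ℝ)..t, (t-u)^p / (p.factorial:ℝ) * gfun a s m q u)
        = gfun a s m (p+q+1) t := by
  intro p
  induction p with
  | zero =>
    intro q hq
    simpa using gstep a ha s m q (by omega) t
  | succ p ih =>
    intro q hq
    have hfp : ((p+1).factorial : ℝ) = ((p:ℝ)+1) * (p.factorial : ℝ) := by
      rw [Nat.factorial_succ]; push_cast; ring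
    have hu : ∀ x ∈ Set.uIcc (-1:ℝ) t,
        HasDerivAt (fun x => (t-x)^(p+1) / ((p+1).factorial:ℝ))
          (-((t-x)^p / (p.factorial:ℝ))) x := by
      intro x _
      have h := (((hasDerivAt_id' x).const_sub t).fun_pow (p+1)).div_const ((p+1).factorial:ℝ)
      refine h.congr_deriv (Eq.symm ?_)
      rw [hfp]
      have h1 : (p.factorial : ℝ) ≠ 0 := by exact_mod_cast p.factorial_ne_zero
      have h2 : ((p:ℝ)+1) ≠ 0 := by positivity
      simp only [Nat.add_sub_cancel]
      push_cast
      field_simp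
    have hv : ∀ x ∈ Set.uIcc (-1:ℝ) t,
        HasDerivAt (fun x => gfun a s m (q+1) x) (gfun a s m q x) x :=
      fun x _ => gfun_deriv a ha s m q (by omega) x
    have hicont : Continuous (fun x : ℝ => -((t-x)^p / (p.factorial:ℝ))) := by fun_prop
    have H := intervalIntegral.integral_mul_deriv_eq_deriv_mul hu hv
      (hicont.intervalIntegrable _ _) ((gfun_cont a s m q).intervalIntegrable _ _)
    rw [H]
    have hz1 : (t-t)^(p+1) / ((p+1).factorial:ℝ) = 0 := by simp
    rw [hz1, gfun_zero]
    have : (∫ x in (-1:ℝ)..t, -((t-x)^p / (p.factorial:ℝ)) * gfun a s m (q+1) x)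
        = -(∫ x in (-1:ℝ)..t, (t-x)^p / (p.factorial:ℝ) * gfun a s m (q+1) x) := by
      rw [← intervalIntegral.integral_neg]
      congr 1; funext x; ring
    rw [this, ih (q+1) (by omega)]
    rw [show p+(q+1)+1 = p+1+q+1 by omega]
    ring


/-- closed form of `J_n^{(a,-s)}` for `n ≥ s`. -/
theorem jacobiJneg_eq (a : ℝ) (ha : -1 < a) (s : ℕ) (hs : 1 ≤ s) (n : ℕ) (hn : s ≤ n) (t : ℝ) :
    jacobiJneg a s n t
      = ((n - s).factorial : ℝ) / (n.factorial : ℝ) * (1 + t) ^ s * jacobiPhat a s (n - s) t := by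
  unfold jacobiJneg jacobiJ
  rw [if_neg (by omega : ¬ n < s)]
  have hint : (fun u => (t-u)^(s-1)/((s-1).factorial:ℝ) * jacobiPhat (a+(s:ℝ)) 0 (n-s) u)
      = fun u => (t-u)^(s-1)/((s-1).factorial:ℝ) * gfun a s (n-s) 0 u := by
    funext u
    unfold gfun
    simp [Nat.factorial_ne_zero]
  rw [hint]
  rw [kernel_int a ha s (n-s) t (s-1) 0 (by omega)]
  rw [show s-1+0+1 = s by omega]
  unfold gfun
  rw [Nat.sub_add_cancel hn]
  rw [show a + (s:ℝ) - (s:ℝ) = a by ring]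
  ring

end
end

section
/- Let d ≥ 2, let s be a positive integer, β > −d−s, and let Y be a solid harmonic of degree m ≤ n on ℝ^d. (i) If m ≤ n−s, then for all (x,t) ∈ ℝ^d × ℝ, ∂_t^s S_{m,Y}^{n,(β,−s)}(x,t) = (−2)^s A_{n−s−m}^{(s+2m+β+d−1,0)} · P_{n−s−m}^{(s+2m+β+d−1,0)}(1−2t) Y(x), while ∂_t^s S_{m,Y}^{n,(β,−s)} ≡ 0 if m > n−s. (ii) For every integer 1 ≤ k ≤ s−1 and every ξ ∈ S^{d−1}: ∂_t^k S_{m,Y}^{n,(β,−s)}(ξ,1) = (−2)^k Y(ξ) δ_{k,n−m} if m > n−s, and ∂_t^k S_{m,Y}^{n,(β,−s)}(ξ,1) = 0 if m ≤ n−s. -/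
open MeasureTheory Finset

noncomputable section

/-- Normalization constant `c_{a,b}`. -/
def cconst (a b : ℝ) : ℝ := Real.Gamma (a + b + 2) / (Real.Gamma (a + 1) * Real.Gamma (b + 1))

/-- Norm square `h_n^{(a,b)}`. -/
def hJac (a b : ℝ) (n : ℕ) : ℝ :=
  poch (a + 1) n * poch (b + 1) n * (a + b + n + 1) /
    ((n.factorial : ℝ) * poch (a + b + 2) n * (a + b + 2 * n + 1))

/-- Norm square `ĥ_n^{(a,b)}`. -/
def hHat (a b : ℝ) (n : ℕ) : ℝ := 2 ^ (a + b + 1) / cconst a b * (jacobiA a b n) ^ 2 * hJac a b n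

/-- Euclidean space `ℝ^d`. -/
abbrev Euc (d : ℕ) : Type := EuclideanSpace ℝ (Fin d)

/-- The surface measure on the unit sphere `S^{d-1} ⊂ ℝ^d`. -/
def sphMeasure (d : ℕ) : Measure (Metric.sphere (0 : Euc d) 1) :=
  (volume : Measure (Euc d)).toSphere

/-- Surface area `ω_d` of the unit sphere. -/
def omegaS (d : ℕ) : ℝ := (sphMeasure d Set.univ).toReal

/-- Integral over the sphere of a function defined on `ℝ^d`. -/
def sphInt (d : ℕ) (g : Euc d → ℝ) : ℝ := ∫ ξ, g (ξ : Euc d) ∂(sphMeasure d)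

/-- The conic surface `V_0^{d+1} = {(x,t) : ‖x‖ = t, 0 ≤ t ≤ 1}` as a subset of `ℝ^d × ℝ`. -/
def coneSet (d : ℕ) : Set (Euc d × ℝ) := {p | ‖p.1‖ = p.2 ∧ 0 ≤ p.2 ∧ p.2 ≤ 1}

/-- The integral `∫_{V_0^{d+1}} f dm`. -/
def coneInt (d : ℕ) (f : Euc d × ℝ → ℝ) : ℝ :=
  ∫ t in (0 : ℝ)..1, t ^ (d - 1) * sphInt d (fun ξ => f (t • ξ, t))

/-- `∂_t^k f`: the `k`-th partial derivative in the last variable `t`, with `x` fixed. -/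
def pdT (k : ℕ) (f : Euc d × ℝ → ℝ) : Euc d × ℝ → ℝ :=
  fun p => iteratedDeriv k (fun τ => f (p.1, τ)) p.2

/-- A solid harmonic of degree `m` on `ℝ^d`: a homogeneous polynomial annihilated by the
Laplacian. -/
def IsSolidHarmonic (d m : ℕ) (Y : Euc d → ℝ) : Prop :=
  ∃ q : MvPolynomial (Fin d) ℝ, q.IsHomogeneous m ∧
    (∑ i : Fin d, MvPolynomial.pderiv i (MvPolynomial.pderiv i q)) = 0 ∧
    ∀ x : Euc d, Y x = MvPolynomial.eval (fun i => x i) q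

/-- The ordinary inner product `⟨f,g⟩_{β,γ}` on the conic surface. -/
def coneInner (d : ℕ) (β γ : ℝ) (f g : Euc d × ℝ → ℝ) : ℝ :=
  cconst (β + d - 1) γ / omegaS d *
    coneInt d (fun p => f p * g p * p.2 ^ β * (1 - p.2) ^ γ)

/-- The (classical) Jacobi basis polynomial `S_{m,Y}^{n,(β,γ)}` on the cone. -/
def coneS (d : ℕ) (β γ : ℝ) (n m : ℕ) (Y : Euc d → ℝ) : Euc d × ℝ → ℝ :=
  fun p => jacobiP (2 * m + β + d - 1) γ (n - m) (1 - 2 * p.2) * Y p.1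

/-- The norm square `h_{n,m}^{β,γ}`. -/
def coneH (d : ℕ) (β γ : ℝ) (n m : ℕ) : ℝ :=
  poch (β + d) (2 * m) / poch (β + γ + d + 1) (2 * m) * hJac (2 * m + β + d - 1) γ (n - m)

/-- The orthogonal projection `proj_n^{β,γ} f` built from an orthonormal spanning family of
solid harmonics. -/
def coneProj (d : ℕ) (N : ℕ → ℕ) (Y : (m : ℕ) → Fin (N m) → Euc d → ℝ) (β γ : ℝ) (n : ℕ)
    (f : Euc d × ℝ → ℝ) : Euc d × ℝ → ℝ :=
  fun p => ∑ m ∈ Finset.range (n + 1), ∑ ℓ : Fin (N m),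
    coneInner d β γ f (coneS d β γ n m (Y m ℓ)) / coneH d β γ n m * coneS d β γ n m (Y m ℓ) p

/-- The Sobolev inner product `⟨f,g⟩_{β,-s}` on the conic surface. -/
def coneSobInner (d : ℕ) (β : ℝ) (s : ℕ) (lam : ℕ → ℝ) (f g : Euc d × ℝ → ℝ) : ℝ :=
  (1 / omegaS d) * coneInt d (fun p => pdT s f p * pdT s g p * p.2 ^ (β + s)) +
    ∑ k ∈ Finset.range s, lam k / omegaS d *
      sphInt d (fun ξ => pdT k f (ξ, 1) * pdT k g (ξ, 1))

/-- The Sobolev basis polynomial `S_{m,Y}^{n,(β,-s)}` on the cone. -/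
def coneSS (d : ℕ) (β : ℝ) (s n m : ℕ) (Y : Euc d → ℝ) : Euc d × ℝ → ℝ :=
  fun p => jacobiJneg (2 * m + β + d - 1) s (n - m) (1 - 2 * p.2) * Y p.1

/-- The Sobolev norm square `h_{m,n}^{(β,-s)}`. -/
def coneSobH (d : ℕ) (β : ℝ) (s : ℕ) (lam : ℕ → ℝ) (n m : ℕ) : ℝ :=
  if n - m < s then 2 ^ (2 * (n - m)) * lam (n - m)
  else 2 ^ ((s : ℝ) - β - 2 * m - d) * hHat ((s : ℝ) + 2 * m + β + d - 1) 0 (n - m - s)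

/-- The Sobolev orthogonal projection `proj_n^{β,-s} f`. -/
def coneSobProj (d : ℕ) (N : ℕ → ℕ) (Y : (m : ℕ) → Fin (N m) → Euc d → ℝ) (β : ℝ) (s : ℕ)
    (lam : ℕ → ℝ) (n : ℕ) (f : Euc d × ℝ → ℝ) : Euc d × ℝ → ℝ :=
  fun p => ∑ m ∈ Finset.range (n + 1), ∑ ℓ : Fin (N m),
    coneSobInner d β s lam f (coneSS d β s n m (Y m ℓ)) / coneSobH d β s lam n m *
      coneSS d β s n m (Y m ℓ) p

/-- The spherical harmonic projection `Proj_k[g]` built from the orthonormal spanning family. -/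
def sphProj (d : ℕ) (N : ℕ → ℕ) (Y : (m : ℕ) → Fin (N m) → Euc d → ℝ) (k : ℕ)
    (g : Euc d → ℝ) : Euc d → ℝ :=
  fun x => ∑ ℓ : Fin (N k), (1 / omegaS d) * sphInt d (fun ξ => g ξ * Y k ℓ ξ) * Y k ℓ x

/-- Hypotheses: `(Y_ℓ^m)` is an orthonormal spanning family of solid harmonics. -/
def IsONBasisFamily (d : ℕ) (N : ℕ → ℕ) (Y : (m : ℕ) → Fin (N m) → Euc d → ℝ) : Prop :=
  (∀ m ℓ, IsSolidHarmonic d m (Y m ℓ)) ∧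
  (∀ m (ℓ ℓ' : Fin (N m)),
    (1 / omegaS d) * sphInt d (fun ξ => Y m ℓ ξ * Y m ℓ' ξ) = if ℓ = ℓ' then 1 else 0) ∧
  (∀ m (Z : Euc d → ℝ), IsSolidHarmonic d m Z →
    ∃ c : Fin (N m) → ℝ, ∀ x, Z x = ∑ ℓ : Fin (N m), c ℓ * Y m ℓ x)



namespace PdTConeSSAux

open intervalIntegral

/-- Iterated antiderivative with base point `-1`. -/
noncomputable def Fiter (f : ℝ → ℝ) : ℕ → ℝ → ℝ
  | 0 => f
  | k + 1 => fun t => ∫ u in (-1:ℝ)..t, Fiter f k u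

lemma Fiter_succ (f : ℝ → ℝ) (k : ℕ) (t : ℝ) :
    Fiter f (k+1) t = ∫ u in (-1:ℝ)..t, Fiter f k u := rfl

lemma Fiter_basic (f : ℝ → ℝ) (hf : Continuous f) (k : ℕ) :
    Continuous (Fiter f k) ∧ ∀ t, HasDerivAt (Fiter f (k+1)) (Fiter f k t) t := by
  induction k with
  | zero =>
    exact ⟨hf, fun t => integral_hasDerivAt_right (hf.intervalIntegrable _ _)
      (hf.stronglyMeasurableAtFilter _ _) hf.continuousAt⟩
  | succ k ih =>
    have hc : Continuous (Fiter f (k+1)) :=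
      Differentiable.continuous (fun t => (ih.2 t).differentiableAt)
    exact ⟨hc, fun t => integral_hasDerivAt_right (hc.intervalIntegrable _ _)
      (hc.stronglyMeasurableAtFilter _ _) hc.continuousAt⟩

lemma Fiter_neg_one (f : ℝ → ℝ) (k : ℕ) (hk : 1 ≤ k) : Fiter f k (-1) = 0 := by
  obtain ⟨p, rfl⟩ : ∃ p, k = p + 1 := ⟨k - 1, by omega⟩
  simp [Fiter_succ]

lemma cauchy_aux (f : ℝ → ℝ) (hf : Continuous f) (q : ℕ) : ∀ (i : ℕ) (t : ℝ),
    (∫ u in (-1:ℝ)..t, (t - u) ^ q / (q.factorial : ℝ) * Fiter f i u)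
      = Fiter f (q + 1 + i) t := by
  induction q with
  | zero => intro i t; simp [Fiter_succ, Nat.add_comm]
  | succ q ih =>
    intro i t
    have hu : ∀ x ∈ Set.uIcc (-1:ℝ) t, HasDerivAt
        (fun x : ℝ => (t - x) ^ (q+1) / ((q+1).factorial : ℝ))
        (-((t - x) ^ q / (q.factorial : ℝ))) x := by
      intro x _
      have h1 : HasDerivAt (fun x : ℝ => t - x) (-1) x := (hasDerivAt_id x).const_sub t
      have h2 : HasDerivAt (fun x : ℝ => (t - x) ^ (q+1) / ((q+1).factorial : ℝ))
          ((↑(q + 1) : ℝ) * (t - x) ^ q * -1 / ((q+1).factorial : ℝ)) x :=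
        (h1.pow (q+1)).div_const ((q+1).factorial : ℝ)
      convert h2 using 1
      have : ((q+1).factorial : ℝ) = (q+1) * (q.factorial : ℝ) := by
        rw [Nat.factorial_succ]; push_cast; ring
      rw [this]
      have hq : (q.factorial : ℝ) ≠ 0 := Nat.cast_ne_zero.mpr q.factorial_ne_zero
      push_cast
      field_simp
    have hv : ∀ x ∈ Set.uIcc (-1:ℝ) t, HasDerivAt (Fiter f (i+1)) (Fiter f i x) x :=
      fun x _ => (Fiter_basic f hf i).2 x
    have hu' : IntervalIntegrable (fun x : ℝ => -((t - x) ^ q / (q.factorial : ℝ)))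
        volume (-1) t := (Continuous.intervalIntegrable (by fun_prop) _ _)
    have hv' : IntervalIntegrable (Fiter f i) volume (-1) t :=
      ((Fiter_basic f hf i).1.intervalIntegrable _ _)
    have ibp := intervalIntegral.integral_mul_deriv_eq_deriv_mul hu hv hu' hv'
    rw [ibp, Fiter_neg_one f (i+1) (by omega)]
    have h0 : (t - t) ^ (q+1) / (((q+1).factorial : ℝ)) * Fiter f (i+1) t = 0 := by
      simp
    rw [h0]
    have : (∫ x in (-1:ℝ)..t, -((t - x) ^ q / (q.factorial : ℝ)) * Fiter f (i+1) x)
        = -(∫ x in (-1:ℝ)..t, (t - x) ^ q / (q.factorial : ℝ) * Fiter f (i+1) x) := by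
      rw [← intervalIntegral.integral_neg]; congr 1; funext x; ring
    rw [this, ih (i+1) t]
    rw [show q + 1 + (i + 1) = q + 1 + 1 + i by omega]
    ring

lemma cauchy0 (f : ℝ → ℝ) (hf : Continuous f) (s : ℕ) (hs : 1 ≤ s) (t : ℝ) :
    (∫ u in (-1:ℝ)..t, (t - u) ^ (s-1) / ((s-1).factorial : ℝ) * f u) = Fiter f s t := by
  have h := cauchy_aux f hf (s-1) 0 t
  rw [show s - 1 + 1 + 0 = s from by omega] at h
  exact h

lemma itDeriv_Fiter (f : ℝ → ℝ) (hf : Continuous f) (c : ℝ) :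
    ∀ (k p : ℕ), k ≤ p → ∀ t : ℝ,
      iteratedDeriv k (fun τ => Fiter f p (1 - 2*τ) * c) t
        = (-2:ℝ)^k * Fiter f (p - k) (1 - 2*t) * c := by
  intro k
  induction k with
  | zero => intro p _ t; simp
  | succ k ih =>
    intro p hk t
    rw [iteratedDeriv_succ, funext (ih p (by omega))]
    have hlin : HasDerivAt (fun τ : ℝ => 1 - 2*τ) (-2) t := by
      simpa using ((hasDerivAt_id t).const_mul (2:ℝ)).const_sub 1
    have hF : HasDerivAt (Fiter f (p - k)) (Fiter f (p - (k+1)) (1 - 2*t)) (1 - 2*t) := by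
      rw [show p - k = (p - (k+1)) + 1 from by omega]
      exact (Fiter_basic f hf _).2 _
    have hcomp : HasDerivAt (fun τ : ℝ => Fiter f (p - k) (1 - 2*τ))
        (Fiter f (p - (k+1)) (1 - 2*t) * (-2)) t := hF.comp t hlin
    have h := (hcomp.const_mul ((-2:ℝ)^k)).mul_const c
    rw [h.deriv]
    ring

lemma itDeriv_pow (j : ℕ) (c : ℝ) :
    ∀ (k : ℕ) (t : ℝ), iteratedDeriv k (fun τ : ℝ => (2 - 2*τ)^j / (j.factorial : ℝ) * c) t
      = (-2:ℝ)^k * (j.descFactorial k : ℝ) / (j.factorial : ℝ) * (2 - 2*t)^(j-k) * c := by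
  intro k
  induction k with
  | zero =>
    intro t
    simp only [iteratedDeriv_zero, pow_zero, Nat.descFactorial_zero, Nat.cast_one, Nat.sub_zero]
    ring
  | succ k ih =>
    intro t
    rw [iteratedDeriv_succ, funext ih]
    have hlin : HasDerivAt (fun τ : ℝ => 2 - 2*τ) (-2) t := by
      simpa using ((hasDerivAt_id t).const_mul (2:ℝ)).const_sub 2
    have hpow := hlin.pow (j - k)
    have h : HasDerivAt
        (fun x : ℝ => (-2:ℝ)^k * (j.descFactorial k : ℝ) / (j.factorial : ℝ) * (2 - 2*x)^(j-k) * c)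
        ((-2:ℝ)^k * (j.descFactorial k : ℝ) / (j.factorial : ℝ)
          * ((↑(j - k) : ℝ) * (2 - 2 * t) ^ (j - k - 1) * -2) * c) t :=
      (hpow.const_mul ((-2:ℝ)^k * (j.descFactorial k : ℝ) / (j.factorial : ℝ))).mul_const c
    rw [h.deriv, Nat.descFactorial_succ, ← Nat.sub_sub]
    push_cast
    ring

lemma cont_jacobiPhat (a b : ℝ) (N : ℕ) : Continuous (jacobiPhat a b N) := by
  unfold jacobiPhat jacobiP
  refine continuous_const.mul (continuous_const.mul ?_)
  refine continuous_finset_sum _ fun k _ => ?_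
  exact continuous_const.mul (((continuous_const.sub continuous_id).div_const 2).pow k)

end PdTConeSSAux

open PdTConeSSAux in
/-- derivatives of the Sobolev basis polynomials `S_{m,Y}^{n,(β,-s)}`. -/
theorem pdT_coneSS (d : ℕ) (hd : 2 ≤ d) (s : ℕ) (hs : 1 ≤ s) (β : ℝ)
    (hβ : -(d : ℝ) - s < β) (n m : ℕ) (hm : m ≤ n)
    (Y : Euc d → ℝ) (hY : IsSolidHarmonic d m Y) :
    ((m + s ≤ n → ∀ (x : Euc d) (t : ℝ),
        pdT s (coneSS d β s n m Y) (x, t)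
          = (-2 : ℝ) ^ s * jacobiA ((s : ℝ) + 2 * m + β + d - 1) 0 (n - s - m)
              * jacobiP ((s : ℝ) + 2 * m + β + d - 1) 0 (n - s - m) (1 - 2 * t) * Y x) ∧
      (n < m + s → ∀ (x : Euc d) (t : ℝ), pdT s (coneSS d β s n m Y) (x, t) = 0)) ∧
    (∀ k : ℕ, 1 ≤ k → k ≤ s - 1 → ∀ ξ : Metric.sphere (0 : Euc d) 1,
      (n < m + s →
        pdT k (coneSS d β s n m Y) ((ξ : Euc d), 1)
          = if k = n - m then (-2 : ℝ) ^ k * Y (ξ : Euc d) else 0) ∧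
      (m + s ≤ n → pdT k (coneSS d β s n m Y) ((ξ : Euc d), 1) = 0)) := by
  have ha : Continuous (jacobiPhat (2 * (m:ℝ) + β + (d:ℝ) - 1 + (s:ℝ)) 0 (n - m - s)) :=
    cont_jacobiPhat _ _ _
  have hfunA : ¬ (n - m < s) → ∀ x : Euc d, (fun τ => coneSS d β s n m Y (x, τ))
      = fun τ => Fiter (jacobiPhat (2 * (m:ℝ) + β + (d:ℝ) - 1 + (s:ℝ)) 0 (n - m - s)) s
          (1 - 2 * τ) * Y x := by
    intro hj x
    funext τ
    simp only [coneSS, jacobiJneg, jacobiJ, if_neg hj]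
    congr 1
    exact cauchy0 _ ha s hs _
  have hfunB : n - m < s → ∀ x : Euc d, (fun τ => coneSS d β s n m Y (x, τ))
      = fun τ : ℝ => (2 - 2 * τ) ^ (n - m) / ((n - m).factorial : ℝ) * Y x := by
    intro hj x
    funext τ
    simp only [coneSS, jacobiJneg, jacobiJ, if_pos hj]
    ring
  constructor
  · constructor
    · intro hms x t
      have hj : ¬ (n - m < s) := by omega
      show iteratedDeriv s (fun τ => coneSS d β s n m Y (x, τ)) t = _
      rw [hfunA hj x, itDeriv_Fiter _ ha (Y x) s s le_rfl t, Nat.sub_self]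
      show (-2:ℝ)^s * jacobiPhat (2 * (m:ℝ) + β + (d:ℝ) - 1 + (s:ℝ)) 0 (n - m - s)
        (1 - 2 * t) * Y x = _
      rw [show (2 * (m:ℝ) + β + (d:ℝ) - 1 + (s:ℝ)) = ((s:ℝ) + 2 * m + β + d - 1) from by ring,
        show n - m - s = n - s - m from by omega]
      simp only [jacobiPhat]
      ring
    · intro hms x t
      have hj : n - m < s := by omega
      show iteratedDeriv s (fun τ => coneSS d β s n m Y (x, τ)) t = 0
      rw [hfunB hj x, itDeriv_pow (n - m) (Y x) s t,
        Nat.descFactorial_eq_zero_iff_lt.mpr hj]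
      simp
  · intro k hk1 hk2 ξ
    constructor
    · intro hms
      have hj : n - m < s := by omega
      show iteratedDeriv k (fun τ => coneSS d β s n m Y ((ξ : Euc d), τ)) 1 = _
      rw [hfunB hj (ξ : Euc d), itDeriv_pow (n - m) (Y (ξ : Euc d)) k 1,
        show (2 - 2 * (1:ℝ)) = 0 from by norm_num]
      by_cases hkj : k = n - m
      · rw [if_pos hkj, hkj, Nat.descFactorial_self, Nat.sub_self, pow_zero]
        have h1 : ((n - m).factorial : ℝ) ≠ 0 :=
          Nat.cast_ne_zero.mpr (Nat.factorial_ne_zero _)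
        field_simp
      · rw [if_neg hkj]
        rcases Nat.lt_or_ge k (n - m) with h | h
        · rw [zero_pow (by omega : n - m - k ≠ 0)]; ring
        · rw [Nat.descFactorial_eq_zero_iff_lt.mpr (by omega : n - m < k)]
          simp
    · intro hms
      have hj : ¬ (n - m < s) := by omega
      show iteratedDeriv k (fun τ => coneSS d β s n m Y ((ξ : Euc d), τ)) 1 = 0
      rw [hfunA hj (ξ : Euc d), itDeriv_Fiter _ ha (Y (ξ : Euc d)) k s (by omega) 1,
        show (1:ℝ) - 2 * 1 = -1 from by norm_num,
        Fiter_neg_one _ (s - k) (by omega)]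
      ring


end
end

section
/- Let d ≥ 2, let s be a positive integer, β > −d−s, and λ_0,…,λ_{s−1} > 0. Let f : ℝ^d × ℝ → ℝ be s-times continuously differentiable on an open neighborhood of V₀^{d+1}, let n, m be integers with n−s < m ≤ n, and let Y be a solid harmonic of degree m. Then ⟨f, S_{m,Y}^{n,(β,−s)}⟩_{β,−s} = (−2)^{n−m} λ_{n−m} · (1/ω_d) ∫_{S^{d−1}} ∂_t^{n−m} f(ξ,1) Y(ξ) dσ(ξ). -/
open MeasureTheory Finset

noncomputable section

lemma polyDeriv (j : ℕ) (c : ℝ) : ∀ k : ℕ,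
    iteratedDeriv k (fun τ : ℝ => (2 - 2 * τ) ^ j * c)
      = fun τ => (-2 : ℝ) ^ k * (j.descFactorial k : ℝ) * (2 - 2 * τ) ^ (j - k) * c := by
  intro k
  induction k with
  | zero => simp
  | succ k ih =>
    rw [iteratedDeriv_succ, ih]
    funext τ
    have h1 : HasDerivAt (fun τ : ℝ => 2 - 2 * τ) (-2) τ := by
      simpa using ((hasDerivAt_id τ).const_mul (2 : ℝ)).const_sub 2
    have h : HasDerivAt
        (fun τ : ℝ => (-2 : ℝ) ^ k * (j.descFactorial k : ℝ) * (2 - 2 * τ) ^ (j - k) * c)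
        ((-2 : ℝ) ^ k * (j.descFactorial k : ℝ) *
          (((j - k : ℕ) : ℝ) * (2 - 2 * τ) ^ (j - k - 1) * (-2)) * c) τ := by
      exact (HasDerivAt.const_mul _ (h1.pow _)).mul_const c
    rw [h.deriv, Nat.descFactorial_succ]
    have he : j - (k + 1) = j - k - 1 := by omega
    rw [he]
    push_cast
    ring

/-- the Sobolev inner product of `f` against `S_{m,Y}^{n,(β,-s)}` when
`n - s < m ≤ n`. -/
theorem coneSobInner_high_m (d : ℕ) (hd : 2 ≤ d) (s : ℕ) (hs : 1 ≤ s) (β : ℝ)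
    (hβ : -(d : ℝ) - s < β) (lam : ℕ → ℝ) (hlam : ∀ k, k ≤ s - 1 → 0 < lam k)
    (f : Euc d × ℝ → ℝ)
    (hf : ∃ U : Set (Euc d × ℝ), IsOpen U ∧ coneSet d ⊆ U ∧ ContDiffOn ℝ s f U)
    (n m : ℕ) (hm₁ : n < m + s) (hm₂ : m ≤ n)
    (Y : Euc d → ℝ) (hY : IsSolidHarmonic d m Y) :
    coneSobInner d β s lam f (coneSS d β s n m Y)
      = (-2 : ℝ) ^ (n - m) * lam (n - m) *
          ((1 / omegaS d) * sphInt d (fun ξ => pdT (n - m) f (ξ, 1) * Y ξ)) := by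
  have hj : n - m < s := by omega
  have key : ∀ (k : ℕ) (p : Euc d × ℝ), pdT k (coneSS d β s n m Y) p
      = (-2 : ℝ) ^ k * ((n - m).descFactorial k : ℝ) * (2 - 2 * p.2) ^ (n - m - k) *
        (Y p.1 / ((n - m).factorial : ℝ)) := by
    intro k p
    have hfun : (fun τ : ℝ => coneSS d β s n m Y (p.1, τ))
        = fun τ : ℝ => (2 - 2 * τ) ^ (n - m) * (Y p.1 / ((n - m).factorial : ℝ)) := by
      funext τ
      simp only [coneSS, jacobiJneg, jacobiJ, if_pos hj]
      ring
    show iteratedDeriv k (fun τ : ℝ => coneSS d β s n m Y (p.1, τ)) p.2 = _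
    rw [hfun, polyDeriv]
  have h1 : coneInt d
      (fun p => pdT s f p * pdT s (coneSS d β s n m Y) p * p.2 ^ (β + s)) = 0 := by
    have hz : (fun p : Euc d × ℝ =>
        pdT s f p * pdT s (coneSS d β s n m Y) p * p.2 ^ (β + s)) = fun _ => 0 := by
      funext p
      have hd0 : (n - m).descFactorial s = 0 := Nat.descFactorial_eq_zero_iff_lt.mpr hj
      rw [key s p, hd0]
      simp
    rw [hz]
    simp [coneInt, sphInt]
  have h2 : ∑ k ∈ Finset.range s, lam k / omegaS d *
        sphInt d (fun ξ => pdT k f (ξ, 1) * pdT k (coneSS d β s n m Y) (ξ, 1))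
      = lam (n - m) / omegaS d *
        ((-2 : ℝ) ^ (n - m) * sphInt d (fun ξ => pdT (n - m) f (ξ, 1) * Y ξ)) := by
    rw [Finset.sum_eq_single (n - m)]
    · congr 1
      have hfac : ((n - m).factorial : ℝ) ≠ 0 := Nat.cast_ne_zero.mpr (n - m).factorial_ne_zero
      have hh : (fun ξ : Euc d => pdT (n - m) f (ξ, 1) *
            pdT (n - m) (coneSS d β s n m Y) (ξ, 1))
          = fun ξ : Euc d => (-2 : ℝ) ^ (n - m) * (pdT (n - m) f (ξ, 1) * Y ξ) := by
        funext ξ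
        rw [key (n - m) (ξ, 1), Nat.descFactorial_self]
        simp only [Nat.sub_self, pow_zero]
        field_simp
      rw [hh]
      simp only [sphInt]
      rw [MeasureTheory.integral_const_mul]
    · intro b _ hb
      have hz : ∀ ξ : Euc d, pdT b (coneSS d β s n m Y) (ξ, 1) = 0 := by
        intro ξ
        rw [key b (ξ, 1)]
        rcases lt_or_gt_of_ne hb with h | h
        · have h0 : (2 - 2 * ((ξ, (1 : ℝ)) : Euc d × ℝ).2) ^ (n - m - b) = 0 := by
            have : (2 - 2 * (1 : ℝ)) = 0 := by norm_num
            rw [show ((ξ, (1 : ℝ)) : Euc d × ℝ).2 = (1 : ℝ) from rfl, this]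
            exact zero_pow (by omega)
          rw [h0]; ring
        · rw [Nat.descFactorial_eq_zero_iff_lt.mpr h]; simp
      have : (fun ξ : Euc d => pdT b f (ξ, 1) * pdT b (coneSS d β s n m Y) (ξ, 1))
          = fun _ => 0 := by
        funext ξ; rw [hz ξ, mul_zero]
      rw [this]
      simp [sphInt]
    · intro h
      exact absurd (Finset.mem_range.mpr hj) h
  simp only [coneSobInner, h1, h2, mul_zero, zero_add]
  ring


end
end

section
/- Let d ≥ 2 be an integer, γ ∈ ℝ, k ≥ 1 an integer, and let p : ℝ → ℝ be twice differentiable. Then for all real t: t(1−t) · ((1−t)^k p(t))″ + (d−1−(d+γ)t) · ((1−t)^k p(t))′ = (1−t)^k [ t(1−t) p″(t) + (d−1−(d+γ+2k)t) p′(t) ] − k (1−t)^{k−1} (d−1−(d+γ+k−1)t) p(t). -/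
noncomputable section

lemma hasDerivAt_pow_one_sub (n : ℕ) (t : ℝ) :
    HasDerivAt (fun u : ℝ => (1 - u) ^ n) (-(n : ℝ) * (1 - t) ^ (n - 1)) t := by
  have h : HasDerivAt (fun u : ℝ => 1 - u) (-1) t := by
    simpa using (hasDerivAt_id t).const_sub 1
  have : HasDerivAt (fun u : ℝ => (1 - u) ^ n) _ t := h.pow n
  convert this using 1
  ring

lemma deriv_pow_mul (n : ℕ) (q : ℝ → ℝ) (hq : Differentiable ℝ q) (t : ℝ) :
    deriv (fun u => (1 - u) ^ n * q u) t
      = -(n : ℝ) * (1 - t) ^ (n - 1) * q t + (1 - t) ^ n * deriv q t := by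
  exact ((hasDerivAt_pow_one_sub n t).mul (hq t).hasDerivAt).deriv

lemma pow_cancel (m : ℕ) (t : ℝ) :
    (m : ℝ) * ((1 - t) * (1 - t) ^ (m - 1)) = (m : ℝ) * (1 - t) ^ m := by
  cases m with
  | zero => simp
  | succ j => rw [pow_succ]; push_cast; ring

/-- one-variable commutation identity for the operator `D_γ`. -/
theorem Dgamma_commutation (d : ℕ) (hd : 2 ≤ d) (γ : ℝ) (k : ℕ) (hk : 1 ≤ k)
    (p : ℝ → ℝ) (hp : Differentiable ℝ p) (hp' : Differentiable ℝ (deriv p)) (t : ℝ) :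
    t * (1 - t) * deriv (deriv (fun u => (1 - u) ^ k * p u)) t
        + ((d : ℝ) - 1 - ((d : ℝ) + γ) * t) * deriv (fun u => (1 - u) ^ k * p u) t
      = (1 - t) ^ k *
          (t * (1 - t) * deriv (deriv p) t
            + ((d : ℝ) - 1 - ((d : ℝ) + γ + 2 * k) * t) * deriv p t)
        - k * (1 - t) ^ (k - 1) * ((d : ℝ) - 1 - ((d : ℝ) + γ + k - 1) * t) * p t := by
  obtain ⟨m, rfl⟩ : ∃ m, k = m + 1 := ⟨k - 1, (Nat.succ_pred_eq_of_pos hk).symm⟩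
  have hd1 : deriv (fun u => (1 - u) ^ (m + 1) * p u)
      = fun t => -((m : ℝ) + 1) * (1 - t) ^ m * p t + (1 - t) ^ (m + 1) * deriv p t := by
    funext s
    have := deriv_pow_mul (m + 1) p hp s
    simpa using this
  have hd2 : deriv (deriv (fun u => (1 - u) ^ (m + 1) * p u)) t
      = -((m : ℝ) + 1) * (-(m : ℝ) * (1 - t) ^ (m - 1) * p t + (1 - t) ^ m * deriv p t)
        + (-((m : ℝ) + 1) * (1 - t) ^ m * deriv p t
            + (1 - t) ^ (m + 1) * deriv (deriv p) t) := by
    rw [hd1]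
    have h1 : HasDerivAt (fun s => -((m : ℝ) + 1) * (1 - s) ^ m * p s)
        (-((m : ℝ) + 1) * (-(m : ℝ) * (1 - t) ^ (m - 1) * p t + (1 - t) ^ m * deriv p t)) t := by
      have : HasDerivAt (fun s => -((m : ℝ) + 1) * ((1 - s) ^ m * p s)) _ t := ((hasDerivAt_pow_one_sub m t).mul (hp t).hasDerivAt).const_mul (-((m : ℝ) + 1))
      convert this using 1
      all_goals try ext s
      all_goals ring
    have h2 : HasDerivAt (fun s => (1 - s) ^ (m + 1) * deriv p s)
        (-((m : ℝ) + 1) * (1 - t) ^ m * deriv p t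
          + (1 - t) ^ (m + 1) * deriv (deriv p) t) t := by
      have : HasDerivAt (fun s => (1 - s) ^ (m + 1) * deriv p s) _ t := (hasDerivAt_pow_one_sub (m + 1) t).mul (hp' t).hasDerivAt
      convert this using 1
      push_cast
      ring
    exact (h1.add h2).deriv
  rw [hd2, hd1]
  have hc := pow_cancel m t
  have hs : (1 - t) ^ (m + 1) = (1 - t) * (1 - t) ^ m := by ring
  push_cast [Nat.add_sub_cancel]
  rw [hs]
  linear_combination ((m : ℝ) + 1) * t * p t * hc
end
end
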